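/- For every positive integers D and T, there exists a base class F ⊆ {0,1}^{ {0,1}* } with VCdim(F) = D such that the end-to-end class after T iterations has VCdim(F^{e2e(T)}) = D · T, where the shattered set consists of DT binary strings of length ⌈log₂(DT)⌉ + 1. -/

import Mathlib

def applyAppend (f : List Bool → Bool) (x : List Bool) : List Bool := x ++ [f x]

def cot (f : List Bool → Bool) (T : ℕ) (x : List Bool) : List Bool :=
  (applyAppend f)^[T] x

def e2e (f : List Bool → Bool) (T : ℕ) (x : List Bool) : Bool :=
  (cot f T x).getLastD false

def e2eClass (F : Set (List Bool → Bool)) (T : ℕ) : Set (List Bool → Bool) :=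
  (fun f => e2e f T) '' F

/-- `H` shatters the particular tuple of points `x`. -/
def ShattersWith {X : Type*} (H : Set (X → Bool)) {d : ℕ} (x : Fin d → X) : Prop :=
  ∀ b : Fin d → Bool, ∃ h ∈ H, ∀ i, h (x i) = b i

def Shatters {X : Type*} (H : Set (X → Bool)) (d : ℕ) : Prop :=
  ∃ x : Fin d → X, ShattersWith H x


/-! Auxiliary machinery for the VC blow-up construction. -/

def encB : ℕ → ℕ → List Bool
  | 0, _ => []
  | L + 1, n => (decide (n % 2 = 1)) :: encB L (n / 2)

def decB : List Bool → ℕ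
  | [] => 0
  | b :: l => (if b then 1 else 0) + 2 * decB l

lemma length_encB (L n : ℕ) : (encB L n).length = L := by
  induction L generalizing n with
  | zero => rfl
  | succ L ih => simp [encB, ih]

lemma decB_encB (L n : ℕ) (h : n < 2 ^ L) : decB (encB L n) = n := by
  induction L generalizing n with
  | zero => interval_cases n; rfl
  | succ L ih =>
    have h2 : n / 2 < 2 ^ L := by
      rw [Nat.div_lt_iff_lt_mul (by norm_num)]
      calc n < 2 ^ (L + 1) := h
        _ = 2 ^ L * 2 := by ring
    simp only [encB, decB, ih _ h2]
    rcases Nat.even_or_odd n with he | ho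
    · have : n % 2 = 0 := Nat.even_iff.mp he
      simp [this]; omega
    · have : n % 2 = 1 := Nat.odd_iff.mp ho
      simp [this]; omega

def idxOf (D T : ℕ) (x : List Bool) : ℕ :=
  decB (x.take (Nat.clog 2 (D * T) + 1)) % (D * T)

def rowOf (D T : ℕ) (x : List Bool) : ℕ := idxOf D T x / D

def colOf (D T : ℕ) (x : List Bool) : ℕ := idxOf D T x % D

def sufOf (D T : ℕ) (x : List Bool) : List Bool :=
  x.drop (Nat.clog 2 (D * T) + 1)

/-- The base-class function parameterized by `b`. -/
def fB (D T : ℕ) (b : ℕ → ℕ → Bool) (x : List Bool) : Bool :=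
  if (∀ k, k < (sufOf D T x).length →
      (sufOf D T x).getD k false = b (min k (rowOf D T x)) (colOf D T x))
  then b (min (sufOf D T x).length (rowOf D T x)) (colOf D T x)
  else false

def uOf (D T : ℕ) (x : List Bool) : ℕ := min (sufOf D T x).length (rowOf D T x)

lemma fB_true_iff (D T : ℕ) (b : ℕ → ℕ → Bool) (x : List Bool) :
    fB D T b x = true ↔
      (∀ k, k < (sufOf D T x).length →
        (sufOf D T x).getD k false = b (min k (rowOf D T x)) (colOf D T x)) ∧
      b (min (sufOf D T x).length (rowOf D T x)) (colOf D T x) = true := by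
  unfold fB; split <;> simp_all

lemma fB_char (D T : ℕ) (b : ℕ → ℕ → Bool) (x : List Bool) :
    fB D T b x = true ↔
      ((∀ k, k < uOf D T x → b k (colOf D T x) = (sufOf D T x).getD k false) ∧
        b (uOf D T x) (colOf D T x) = true) ∧
      (∀ k, uOf D T x ≤ k → k < (sufOf D T x).length →
        (sufOf D T x).getD k false = true) := by
  rw [fB_true_iff]
  set s := (sufOf D T x).length with hs
  set t := rowOf D T x with ht
  set j := colOf D T x with hj
  set w := sufOf D T x with hw
  have hu : uOf D T x = min s t := rfl
  rw [hu]
  constructor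
  · rintro ⟨H, B⟩
    refine ⟨⟨fun k hk => ?_, B⟩, fun k hk1 hk2 => ?_⟩
    · have hks : k < s := lt_of_lt_of_le hk (min_le_left _ _)
      have hkt : k ≤ t := le_of_lt (lt_of_lt_of_le hk (min_le_right _ _))
      have := H k hks
      rwa [min_eq_left hkt, eq_comm] at this
    · -- u ≤ k < s forces min s t = t ≤ k
      have hts : t < s := by omega
      have hmt : min s t = t := min_eq_right (le_of_lt hts)
      have hkt : t ≤ k := by omega
      have := H k hk2
      rw [min_eq_right hkt] at this
      rw [this, ← B, hmt]
  · rintro ⟨⟨A, Bu⟩, ok⟩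
    refine ⟨fun k hk => ?_, Bu⟩
    by_cases hku : k < min s t
    · have hkt : k ≤ t := le_of_lt (lt_of_lt_of_le hku (min_le_right _ _))
      rw [min_eq_left hkt, eq_comm]; exact A k hku
    · push_neg at hku
      have hts : t < s := by omega
      have hmt : min s t = t := min_eq_right (le_of_lt hts)
      have hkt : t ≤ k := by omega
      rw [min_eq_right hkt, ← hmt, Bu]
      exact ok k (by omega) hk

/-- Two points in the same column cannot be distinguished in this direction. -/
lemma fB_no_two (D T : ℕ) (x x' : List Bool)
    (hc : colOf D T x = colOf D T x') (hu : uOf D T x ≤ uOf D T x')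
    (b3 : ℕ → ℕ → Bool) (h3 : fB D T b3 x = true) (h3' : fB D T b3 x' = true)
    (b : ℕ → ℕ → Bool) (h' : fB D T b x' = true) : fB D T b x = true := by
  rw [fB_char] at h3 h3' h' ⊢
  obtain ⟨⟨A3, B3⟩, okx⟩ := h3
  obtain ⟨⟨A3', B3'⟩, _⟩ := h3'
  obtain ⟨⟨A', B'⟩, _⟩ := h'
  set u := uOf D T x
  set u' := uOf D T x'
  refine ⟨⟨fun k hk => ?_, ?_⟩, okx⟩
  · -- b k j = w_k
    have h1 : b k (colOf D T x) = (sufOf D T x').getD k false := by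
      rw [hc]; exact A' k (by omega)
    have h2 : b3 k (colOf D T x) = (sufOf D T x').getD k false := by
      rw [hc]; exact A3' k (by omega)
    have h3 : b3 k (colOf D T x) = (sufOf D T x).getD k false := A3 k hk
    rw [h1, ← h2, h3]
  · rcases eq_or_lt_of_le hu with he | hlt
    · rw [hc, he]; exact B'
    · have h1 : b (uOf D T x) (colOf D T x) = (sufOf D T x').getD u false := by
        rw [hc]; exact A' u hlt
      have h2 : b3 (uOf D T x) (colOf D T x) = (sufOf D T x').getD u false := by
        rw [hc]; exact A3' u hlt
      rw [h1, ← h2, B3]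
lemma take_encB (L n : ℕ) (w : List Bool) : (encB L n ++ w).take L = encB L n := by
  have h := List.take_left (l₁ := encB L n) (l₂ := w)
  rwa [length_encB] at h

lemma drop_encB (L n : ℕ) (w : List Bool) : (encB L n ++ w).drop L = w := by
  have h := List.drop_left (l₁ := encB L n) (l₂ := w)
  rwa [length_encB] at h

lemma idxOf_encB (D T n : ℕ) (hn : n < D * T) (w : List Bool) :
    idxOf D T (encB (Nat.clog 2 (D * T) + 1) n ++ w) = n := by
  have h2 : n < 2 ^ (Nat.clog 2 (D * T) + 1) := by
    calc n < D * T := hn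
      _ ≤ 2 ^ Nat.clog 2 (D * T) := Nat.le_pow_clog (by norm_num) _
      _ ≤ 2 ^ (Nat.clog 2 (D * T) + 1) := Nat.pow_le_pow_right (by norm_num) (by omega)
  unfold idxOf
  rw [take_encB, decB_encB _ _ h2, Nat.mod_eq_of_lt hn]

lemma sufOf_encB (D T n : ℕ) (w : List Bool) :
    sufOf D T (encB (Nat.clog 2 (D * T) + 1) n ++ w) = w := drop_encB _ _ _

lemma fB_encB (D T : ℕ) (b : ℕ → ℕ → Bool) (n : ℕ) (hn : n < D * T) (r : ℕ) :
    fB D T b (encB (Nat.clog 2 (D * T) + 1) n ++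
        List.ofFn (fun k : Fin r => b (min (k : ℕ) (n / D)) (n % D))) =
      b (min r (n / D)) (n % D) := by
  set L := Nat.clog 2 (D * T) + 1
  set g : Fin r → Bool := fun k => b (min (k : ℕ) (n / D)) (n % D) with hg
  have hrow : rowOf D T (encB L n ++ List.ofFn g) = n / D := by
    unfold rowOf; rw [idxOf_encB D T n hn]
  have hcol : colOf D T (encB L n ++ List.ofFn g) = n % D := by
    unfold colOf; rw [idxOf_encB D T n hn]
  have hsuf : sufOf D T (encB L n ++ List.ofFn g) = List.ofFn g := sufOf_encB D T n _
  unfold fB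
  rw [hrow, hcol, hsuf, if_pos, List.length_ofFn]
  intro k hk
  rw [List.length_ofFn] at hk
  rw [List.getD_eq_getElem _ _ (by simpa using hk), List.getElem_ofFn]

lemma cot_fB_encB (D T : ℕ) (b : ℕ → ℕ → Bool) (n : ℕ) (hn : n < D * T) (r : ℕ) :
    cot (fB D T b) r (encB (Nat.clog 2 (D * T) + 1) n) =
      encB (Nat.clog 2 (D * T) + 1) n ++
        List.ofFn (fun k : Fin r => b (min (k : ℕ) (n / D)) (n % D)) := by
  induction r with
  | zero => simp [cot]
  | succ r ih =>
    have : cot (fB D T b) (r + 1) (encB (Nat.clog 2 (D * T) + 1) n) =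
        applyAppend (fB D T b) (cot (fB D T b) r (encB (Nat.clog 2 (D * T) + 1) n)) :=
      Function.iterate_succ_apply' _ _ _
    rw [this, ih]
    unfold applyAppend
    rw [fB_encB D T b n hn r]
    rw [List.ofFn_succ' (fun k : Fin (r+1) => b (min (k : ℕ) (n / D)) (n % D)),
      List.concat_eq_append, ← List.append_assoc]
    simp

lemma e2e_fB_encB (D T : ℕ) (hD : 0 < D) (hT : 0 < T) (b : ℕ → ℕ → Bool)
    (n : ℕ) (hn : n < D * T) :
    e2e (fB D T b) T (encB (Nat.clog 2 (D * T) + 1) n) = b (n / D) (n % D) := by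
  obtain ⟨T', rfl⟩ : ∃ T', T = T' + 1 := ⟨T - 1, by omega⟩
  unfold e2e
  rw [cot_fB_encB D _ b n hn,
    List.ofFn_succ' (fun k : Fin (T'+1) => b (min (k : ℕ) (n / D)) (n % D)),
    List.concat_eq_append, ← List.append_assoc, List.getLastD_concat]
  have ht : n / D ≤ T' := by
    have := (Nat.div_lt_iff_lt_mul hD).mpr (by rw [mul_comm]; exact hn : n < (T' + 1) * D)
    omega
  simp [Fin.last, min_eq_right ht]

lemma fB_congr (D T : ℕ) (hD : 0 < D) (hT : 0 < T) (b b' : ℕ → ℕ → Bool)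
    (h : ∀ s j, s < T → j < D → b s j = b' s j) : fB D T b = fB D T b' := by
  funext x
  have hm : 0 < D * T := Nat.mul_pos hD hT
  have hi : idxOf D T x < D * T := Nat.mod_lt _ hm
  have hrow : rowOf D T x < T := by
    unfold rowOf
    rw [Nat.div_lt_iff_lt_mul hD, mul_comm]
    exact hi
  have hcol : colOf D T x < D := Nat.mod_lt _ hD
  have key : ∀ k, b (min k (rowOf D T x)) (colOf D T x)
      = b' (min k (rowOf D T x)) (colOf D T x) := fun k =>
    h _ _ (lt_of_le_of_lt (min_le_right _ _) hrow) hcol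
  unfold fB
  refine if_congr ⟨fun H k hk => ?_, fun H k hk => ?_⟩ (key _) rfl
  · rw [← key]; exact H k hk
  · rw [key]; exact H k hk

/-- for every `D, T ≥ 1` there is a base class `F` with `VCdim(F) = D`
whose end-to-end class after `T` iterations has `VCdim(F^{e2e(T)}) = D·T`, the
shattered set consisting of `D·T` binary strings of length `⌈log₂(DT)⌉ + 1`. -/
theorem exists_baseClass_vc_blowup (D T : ℕ) (hD : 0 < D) (hT : 0 < T) :
    ∃ F : Set (List Bool → Bool),
      (Shatters F D ∧ ∀ d, Shatters F d → d ≤ D) ∧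
      (∃ x : Fin (D * T) → List Bool,
        (∀ i, (x i).length = Nat.clog 2 (D * T) + 1) ∧
        ShattersWith (e2eClass F T) x) ∧
      (∀ d, Shatters (e2eClass F T) d → d ≤ D * T) := by
  have hm : 0 < D * T := Nat.mul_pos hD hT
  refine ⟨Set.range (fB D T), ⟨?_, ?_⟩, ⟨fun i => encB (Nat.clog 2 (D * T) + 1) (i : ℕ),
    fun i => length_encB _ _, ?_⟩, ?_⟩
  · -- Shatters F D
    refine ⟨fun j => encB (Nat.clog 2 (D * T) + 1) (j : ℕ), fun β => ?_⟩
    set b : ℕ → ℕ → Bool := fun _ c => if h : c < D then β ⟨c, h⟩ else false with hb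
    refine ⟨fB D T b, ⟨b, rfl⟩, fun j => ?_⟩
    have hj : (j : ℕ) < D * T := lt_of_lt_of_le j.isLt (Nat.le_mul_of_pos_right D hT)
    have key := fB_encB D T b (j : ℕ) hj 0
    simp only [List.ofFn_zero, List.append_nil, Nat.zero_min] at key
    rw [key, Nat.mod_eq_of_lt j.isLt, hb]
    simp [j.isLt]
  · -- VCdim(F) ≤ D
    rintro d ⟨x, hx⟩
    by_contra hd
    push_neg at hd
    have key : ∀ a a' : Fin d, a ≠ a' → colOf D T (x a) = colOf D T (x a') →
        uOf D T (x a) ≤ uOf D T (x a') → False := by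
      intro a a' hne hcol hu
      obtain ⟨h3, hmem3, hval3⟩ := hx (fun _ => true)
      obtain ⟨b3, rfl⟩ := hmem3
      obtain ⟨h2, hmem2, hval2⟩ := hx (fun k => decide (k ≠ a))
      obtain ⟨b2, rfl⟩ := hmem2
      have h2a' : fB D T b2 (x a') = true := by
        rw [hval2 a']; simp [hne.symm]
      have htrue : fB D T b2 (x a) = true :=
        fB_no_two D T (x a) (x a') hcol hu b3 (hval3 a) (hval3 a') b2 h2a'
      have hfalse : fB D T b2 (x a) = false := by
        rw [hval2 a]; simp
      rw [htrue] at hfalse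
      simp at hfalse
    have hcard : Fintype.card (Fin D) < Fintype.card (Fin d) := by
      simpa using hd
    obtain ⟨i, i', hne, heq⟩ := Fintype.exists_ne_map_eq_of_card_lt
      (fun i : Fin d => (⟨colOf D T (x i), Nat.mod_lt _ hD⟩ : Fin D)) hcard
    have hcol : colOf D T (x i) = colOf D T (x i') := congrArg Fin.val heq
    rcases le_total (uOf D T (x i)) (uOf D T (x i')) with h | h
    · exact key i i' hne hcol h
    · exact key i' i hne.symm hcol.symm h
  · -- e2e class shatters the D*T points
    intro β
    set b : ℕ → ℕ → Bool := fun s c =>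
      if h : s * D + c < D * T ∧ c < D then β ⟨s * D + c, h.1⟩ else false with hb
    refine ⟨e2e (fB D T b) T, ⟨fB D T b, ⟨b, rfl⟩, rfl⟩, fun i => ?_⟩
    show e2e (fB D T b) T (encB (Nat.clog 2 (D * T) + 1) (i : ℕ)) = β i
    rw [e2e_fB_encB D T hD hT b (i : ℕ) i.isLt]
    have heqi : (i : ℕ) / D * D + (i : ℕ) % D = (i : ℕ) := by
      rw [mul_comm]; exact Nat.div_add_mod _ _
    have hlt : (i : ℕ) / D * D + (i : ℕ) % D < D * T := by rw [heqi]; exact i.isLt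
    have hmod : (i : ℕ) % D < D := Nat.mod_lt _ hD
    rw [hb]
    simp only []
    rw [dif_pos ⟨hlt, hmod⟩]
    congr 1
    exact Fin.ext heqi
  · -- VCdim(e2e class) ≤ D*T
    rintro d ⟨x, hx⟩
    have H : ∀ β : Fin d → Bool, ∃ b : ℕ → ℕ → Bool,
        ∀ i, e2e (fB D T b) T (x i) = β i := by
      intro β
      obtain ⟨h, hmem, hval⟩ := hx β
      obtain ⟨f, hfF, rfl⟩ := hmem
      obtain ⟨b, rfl⟩ := hfF
      exact ⟨b, hval⟩
    choose bb hbb using H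
    have hinj : Function.Injective
        (fun (β : Fin d → Bool) (s : Fin T) (j : Fin D) => bb β (s : ℕ) (j : ℕ)) := by
      intro β β' he
      have hfeq : fB D T (bb β) = fB D T (bb β') := by
        refine fB_congr D T hD hT _ _ (fun s j hs hj => ?_)
        exact congrFun (congrFun he ⟨s, hs⟩) ⟨j, hj⟩
      funext i
      rw [← hbb β i, ← hbb β' i, hfeq]
    have hcard := Fintype.card_le_of_injective _ hinj
    have h2 : 2 ^ d ≤ 2 ^ (D * T) := by
      simpa [Fintype.card_fun, Fintype.card_fin, ← pow_mul, mul_comm] using hcard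
    exact (Nat.pow_le_pow_iff_right (by norm_num)).mp h2
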